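/- For |q|<1 and complex x, ∑_{j,k,ℓ≥0} (x;q²)_k x^{j+ℓ} (−1)^{j+k} q^{(j+k+ℓ)(j+k+ℓ−1)+ℓ²+3k} / ((q;q)_j (q²;q²)_k (q²;q²)_ℓ) = (q³;q²)_∞ (x;q²)_∞. -/

import Mathlib

open scoped BigOperators
open Filter Finset

noncomputable def qp (a q : ℂ) (n : ℕ) : ℂ := ∏ i ∈ Finset.range n, (1 - a * q ^ i)

noncomputable def qpInf (a q : ℂ) : ℂ := ∏' i : ℕ, (1 - a * q ^ i)

lemma qp_zero (a q : ℂ) : qp a q 0 = 1 := by simp [qp]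

lemma qp_succ (a q : ℂ) (n : ℕ) : qp a q (n+1) = qp a q n * (1 - a * q ^ n) :=
  Finset.prod_range_succ _ _

lemma qp_ne_zero {a q : ℂ} (ha : ‖a‖ < 1) (hq : ‖q‖ ≤ 1) (n : ℕ) : qp a q n ≠ 0 := by
  refine Finset.prod_ne_zero_iff.2 fun i _ => ?_
  intro h
  have h1 : a * q ^ i = 1 := by linear_combination -h
  have : ‖a * q ^ i‖ < 1 := by
    calc ‖a * q ^ i‖ = ‖a‖ * ‖q‖ ^ i := by simp [norm_mul, norm_pow]
    _ ≤ ‖a‖ * 1 := by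
        refine mul_le_mul_of_nonneg_left ?_ (norm_nonneg a)
        exact pow_le_one₀ (norm_nonneg q) hq
    _ < 1 := by simpa using ha
  rw [h1] at this; simp at this

lemma norm_qp_ge {a q : ℂ} (ha : ‖a‖ < 1) (hq : ‖q‖ ≤ 1) (n : ℕ) :
    (1 - ‖a‖) ^ n ≤ ‖qp a q n‖ := by
  rw [qp, norm_prod]
  calc (1 - ‖a‖) ^ n = ∏ _i ∈ Finset.range n, (1 - ‖a‖) := by
        rw [Finset.prod_const, Finset.card_range]
    _ ≤ ∏ i ∈ Finset.range n, ‖1 - a * q ^ i‖ := by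
        refine Finset.prod_le_prod (fun i _ => by linarith) (fun i _ => ?_)
        have h2 : ‖a * q ^ i‖ ≤ ‖a‖ := by
          rw [norm_mul, norm_pow]
          calc ‖a‖ * ‖q‖ ^ i ≤ ‖a‖ * 1 :=
            mul_le_mul_of_nonneg_left (pow_le_one₀ (norm_nonneg q) hq) (norm_nonneg a)
          _ = ‖a‖ := mul_one _
        calc 1 - ‖a‖ ≤ 1 - ‖a * q ^ i‖ := by linarith
        _ = ‖(1:ℂ)‖ - ‖a * q ^ i‖ := by simp
        _ ≤ ‖1 - a * q ^ i‖ := norm_sub_norm_le _ _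

lemma norm_div_qp_le {a q : ℂ} (ha : ‖a‖ < 1) (hq : ‖q‖ ≤ 1) (n : ℕ) (z : ℂ) :
    ‖z / qp a q n‖ ≤ ‖z‖ * ((1 - ‖a‖)⁻¹) ^ n := by
  have hpos : (0:ℝ) < 1 - ‖a‖ := by linarith
  rw [norm_div, div_le_iff₀ (lt_of_lt_of_le (pow_pos hpos n) (norm_qp_ge ha hq n))]
  calc ‖z‖ = ‖z‖ * ((1 - ‖a‖)⁻¹ * (1 - ‖a‖)) ^ n := by
        rw [inv_mul_cancel₀ (by linarith), one_pow, mul_one]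
    _ = ‖z‖ * (1 - ‖a‖)⁻¹ ^ n * (1 - ‖a‖) ^ n := by rw [mul_pow]; ring
    _ ≤ ‖z‖ * (1 - ‖a‖)⁻¹ ^ n * ‖qp a q n‖ := by
        refine mul_le_mul_of_nonneg_left (norm_qp_ge ha hq n) ?_
        have : (0:ℝ) ≤ (1 - ‖a‖)⁻¹ ^ n := by positivity
        positivity

/-- key summability helper -/
lemma summable_aux {A r : ℝ} (hA : 0 ≤ A) (h0 : 0 ≤ r) (hr : r < 1) :
    Summable (fun n : ℕ => A ^ n * r ^ (n * (n - 1) / 2)) := by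
  have key : ∀ n : ℕ, A ^ (n+1) * r ^ ((n+1) * n / 2)
      = (A ^ n * r ^ (n * (n - 1) / 2)) * (A * r ^ n) := by
    intro n
    have h1 : (n+1) * n / 2 = n * (n-1) / 2 + n := by
      have e1 := Finset.sum_range_id (n+1)
      have e2 := Finset.sum_range_id n
      have e3 := Finset.sum_range_succ (fun i => i) n
      simp only [Nat.add_sub_cancel] at e1
      omega
    rw [h1, pow_add, pow_succ]
    ring
  have hlim : Tendsto (fun n : ℕ => A * r ^ n) atTop (nhds 0) := by
    have := tendsto_pow_atTop_nhds_zero_of_lt_one h0 hr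
    simpa using this.const_mul A
  have hev : ∀ᶠ n in atTop, A * r ^ n ≤ 1/2 := by
    have := hlim.eventually_le_const (show (0:ℝ) < 1/2 by norm_num)
    exact this
  refine summable_of_ratio_norm_eventually_le (r := 1/2) (by norm_num) ?_
  filter_upwards [hev] with n hn
  have hterm : (0:ℝ) ≤ A ^ n * r ^ (n * (n - 1) / 2) := by positivity
  have h2 : (0:ℝ) ≤ A * r ^ n := by positivity
  rw [Real.norm_of_nonneg (by positivity), Real.norm_of_nonneg hterm]
  calc A ^ (n+1) * r ^ ((n+1) * n / 2) = (A ^ n * r ^ (n * (n - 1) / 2)) * (A * r ^ n) :=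
        key n
    _ ≤ (A ^ n * r ^ (n * (n - 1) / 2)) * (1/2) := by
        exact mul_le_mul_of_nonneg_left hn hterm
    _ = 1/2 * (A ^ n * r ^ (n * (n - 1) / 2)) := by ring

/-- norm of product of (1 + z i) minus one -/
lemma norm_prod_one_add_sub_one (s : Finset ℕ) (z : ℕ → ℂ) :
    ‖(∏ i ∈ s, (1 + z i)) - 1‖ ≤ (∏ i ∈ s, (1 + ‖z i‖)) - 1 := by
  classical
  induction s using Finset.cons_induction with
  | empty => simp
  | cons a s ha ih =>
    rw [Finset.prod_cons, Finset.prod_cons]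
    have hP : ‖∏ i ∈ s, (1 + z i)‖ ≤ ∏ i ∈ s, (1 + ‖z i‖) := by
      rw [norm_prod]
      refine Finset.prod_le_prod (fun i _ => norm_nonneg _) (fun i _ => ?_)
      calc ‖1 + z i‖ ≤ ‖(1:ℂ)‖ + ‖z i‖ := norm_add_le _ _
        _ = 1 + ‖z i‖ := by simp
    have expand : (1 + z a) * ∏ i ∈ s, (1 + z i) - 1
        = ((∏ i ∈ s, (1 + z i)) - 1) + z a * ∏ i ∈ s, (1 + z i) := by ring
    rw [expand]
    calc ‖((∏ i ∈ s, (1 + z i)) - 1) + z a * ∏ i ∈ s, (1 + z i)‖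
        ≤ ‖(∏ i ∈ s, (1 + z i)) - 1‖ + ‖z a‖ * ‖∏ i ∈ s, (1 + z i)‖ := by
          refine le_trans (norm_add_le _ _) ?_
          rw [norm_mul]
      _ ≤ ((∏ i ∈ s, (1 + ‖z i‖)) - 1) + ‖z a‖ * ∏ i ∈ s, (1 + ‖z i‖) := by
          refine add_le_add ih (mul_le_mul_of_nonneg_left hP (norm_nonneg _))
      _ = (1 + ‖z a‖) * ∏ i ∈ s, (1 + ‖z i‖) - 1 := by ring

lemma prod_one_add_le_exp (s : Finset ℕ) (g : ℕ → ℝ) (hg : ∀ i, 0 ≤ g i) :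
    ∏ i ∈ s, (1 + g i) ≤ Real.exp (∑ i ∈ s, g i) := by
  rw [Real.exp_sum]
  refine Finset.prod_le_prod (fun i _ => by linarith [hg i]) (fun i _ => ?_)
  have := Real.add_one_le_exp (g i)
  linarith
lemma hasProd_qpInf (a q : ℂ) (hq : ‖q‖ < 1) :
    HasProd (fun i : ℕ => 1 - a * q ^ i) (qpInf a q) := by
  set f : ℕ → ℂ := fun i => 1 - a * q ^ i with hf
  set g : ℕ → ℝ := fun i => ‖a‖ * ‖q‖ ^ i with hgdef
  have hgnn : ∀ i, 0 ≤ g i := fun i => by positivity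
  have hgs : Summable g := (summable_geometric_of_lt_one (norm_nonneg q) hq).mul_left ‖a‖
  have hnorm : ∀ i, ‖a * q ^ i‖ = g i := fun i => by
    simp [hgdef, norm_mul, norm_pow]
  set G : ℝ := ∑' i, g i with hG
  set B : ℝ := Real.exp G with hB
  have hBpos : 0 < B := Real.exp_pos _
  -- bound for any finset
  have bound1 : ∀ s : Finset ℕ, ‖∏ i ∈ s, f i‖ ≤ Real.exp (∑ i ∈ s, g i) := by
    intro s
    calc ‖∏ i ∈ s, f i‖ = ∏ i ∈ s, ‖f i‖ := norm_prod _ _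
      _ ≤ ∏ i ∈ s, (1 + g i) := by
          refine Finset.prod_le_prod (fun i _ => norm_nonneg _) (fun i _ => ?_)
          calc ‖f i‖ = ‖1 - a * q ^ i‖ := rfl
            _ ≤ ‖(1:ℂ)‖ + ‖a * q ^ i‖ := norm_sub_le _ _
            _ = 1 + g i := by rw [hnorm]; simp
      _ ≤ Real.exp (∑ i ∈ s, g i) := prod_one_add_le_exp s g hgnn
  have boundB : ∀ s : Finset ℕ, ‖∏ i ∈ s, f i‖ ≤ B := by
    intro s
    refine le_trans (bound1 s) (Real.exp_le_exp.2 (Summable.sum_le_tsum s (fun i _ => hgnn i) hgs))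
  -- bound for prod minus one
  have bound2 : ∀ s : Finset ℕ, ‖(∏ i ∈ s, f i) - 1‖ ≤ Real.exp (∑ i ∈ s, g i) - 1 := by
    intro s
    have h1 : ∀ i, f i = 1 + (-(a * q ^ i)) := fun i => by ring
    have := norm_prod_one_add_sub_one s (fun i => -(a * q ^ i))
    simp only [norm_neg] at this
    calc ‖(∏ i ∈ s, f i) - 1‖ = ‖(∏ i ∈ s, (1 + -(a * q ^ i))) - 1‖ := by
          rw [Finset.prod_congr rfl (fun i _ => h1 i)]
      _ ≤ (∏ i ∈ s, (1 + ‖a * q ^ i‖)) - 1 := this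
      _ ≤ Real.exp (∑ i ∈ s, g i) - 1 := by
          have h2 : ∏ i ∈ s, (1 + ‖a * q ^ i‖) ≤ Real.exp (∑ i ∈ s, g i) := by
            have : ∀ i ∈ s, (1 + ‖a * q ^ i‖) = 1 + g i := fun i _ => by rw [hnorm]
            rw [Finset.prod_congr rfl this]
            exact prod_one_add_le_exp s g hgnn
          linarith
  -- tail sums
  have tail_sum : ∀ M : ℕ, Summable (fun i => g (i + M)) := fun M =>
    (summable_nat_add_iff M).2 hgs
  have tail_eq : ∀ M : ℕ, (∑' i, g (i + M)) = ‖q‖ ^ M * ∑' i, g i := by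
    intro M
    rw [← tsum_mul_left]
    refine tsum_congr fun i => ?_
    simp only [hgdef, pow_add]
    ring
  have tail_tendsto : Tendsto (fun M => ∑' i, g (i + M)) atTop (nhds 0) := by
    simp only [tail_eq]
    have := tendsto_pow_atTop_nhds_zero_of_lt_one (norm_nonneg q) hq
    simpa using this.mul_const (∑' i, g i)
  -- the CauchySeq
  have hcs : CauchySeq (fun s : Finset ℕ => ∏ i ∈ s, f i) := by
    rw [Metric.cauchySeq_iff']
    intro ε hε
    -- choose M with B * (exp (tail M) - 1) < ε
    have hBe : Tendsto (fun M => B * (Real.exp (∑' i, g (i + M)) - 1)) atTop (nhds 0) := by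
      have h1 : Tendsto (fun M => Real.exp (∑' i, g (i + M)) - 1) atTop (nhds 0) := by
        have := (Real.continuous_exp.tendsto 0).comp tail_tendsto
        simpa using this.sub_const 1
      simpa using h1.const_mul B
    obtain ⟨M, hM⟩ := (hBe.eventually_lt_const hε).exists
    refine ⟨Finset.range M, fun s hs => ?_⟩
    -- s ⊇ range M
    have hsub : Finset.range M ⊆ s := hs
    have hsplit : ∏ i ∈ s, f i = (∏ i ∈ s \ Finset.range M, f i) * ∏ i ∈ Finset.range M, f i :=
      (Finset.prod_sdiff hsub).symm
    have key : ∏ i ∈ s, f i - ∏ i ∈ Finset.range M, f i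
        = (∏ i ∈ Finset.range M, f i) * ((∏ i ∈ s \ Finset.range M, f i) - 1) := by
      rw [hsplit]; ring
    rw [dist_eq_norm, key, norm_mul]
    have hsum_le : ∑ i ∈ s \ Finset.range M, g i ≤ ∑' i, g (i + M) := by
      have himg : ∑ i ∈ s \ Finset.range M, g i
          = ∑ j ∈ (s \ Finset.range M).image (fun i => i - M), g (j + M) := by
        rw [Finset.sum_image]
        · refine Finset.sum_congr rfl fun i hi => ?_
          have : M ≤ i := by
            have := Finset.mem_sdiff.1 hi
            simpa using this.2
          congr 1
          omega
        · intro i hi j hj hij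
          have hi' : M ≤ i := by have := Finset.mem_sdiff.1 hi; simpa using this.2
          have hj' : M ≤ j := by have := Finset.mem_sdiff.1 hj; simpa using this.2
          dsimp only at hij
          omega
      rw [himg]
      exact Summable.sum_le_tsum _ (fun i _ => hgnn _) (tail_sum M)
    calc ‖∏ i ∈ Finset.range M, f i‖ * ‖(∏ i ∈ s \ Finset.range M, f i) - 1‖
        ≤ B * (Real.exp (∑' i, g (i + M)) - 1) := by
          refine mul_le_mul (boundB _) ?_ (norm_nonneg _) (le_of_lt hBpos)
          refine le_trans (bound2 _) ?_
          have := Real.exp_le_exp.2 hsum_le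
          linarith
      _ < ε := hM
  obtain ⟨L, hL⟩ := cauchySeq_tendsto_of_complete hcs
  have hHP : HasProd f L := hL
  have : qpInf a q = L := hHP.tprod_eq
  rw [hf, this]
  exact hHP

lemma multipliable_qpInf (a q : ℂ) (hq : ‖q‖ < 1) :
    Multipliable (fun i : ℕ => 1 - a * q ^ i) :=
  (hasProd_qpInf a q hq).multipliable

lemma tendsto_qp (a q : ℂ) (hq : ‖q‖ < 1) :
    Tendsto (fun n => qp a q n) atTop (nhds (qpInf a q)) := by
  have := (hasProd_qpInf a q hq).tendsto_prod_nat
  simpa [qp] using this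
noncomputable def ec (Q : ℂ) (n : ℕ) : ℂ := (-1)^n * Q^(n*(n-1)/2) / qp Q Q n

lemma tri_succ (n : ℕ) : (n+1)*n/2 = n*(n-1)/2 + n := by
  have e1 := Finset.sum_range_id (n+1)
  have e2 := Finset.sum_range_id n
  have e3 := Finset.sum_range_succ (fun i => i) n
  simp only [Nat.add_sub_cancel] at e1
  omega

lemma ec_zero (Q : ℂ) : ec Q 0 = 1 := by simp [ec, qp_zero]

lemma one_sub_pow_ne {Q : ℂ} (hQ : ‖Q‖ < 1) (n : ℕ) : (1 : ℂ) - Q^(n+1) ≠ 0 := by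
  intro h
  have h1 : Q^(n+1) = 1 := by linear_combination -h
  have : ‖Q^(n+1)‖ < 1 := by
    rw [norm_pow]
    calc ‖Q‖^(n+1) ≤ ‖Q‖^1 := by
          refine pow_le_pow_of_le_one (norm_nonneg Q) (le_of_lt hQ) (by omega)
      _ < 1 := by simpa using hQ
  rw [h1] at this; simp at this

lemma ec_succ {Q : ℂ} (hQ : ‖Q‖ < 1) (n : ℕ) :
    ec Q (n+1) * (1 - Q^(n+1)) = -(Q^n * ec Q n) := by
  have hne : qp Q Q n ≠ 0 := qp_ne_zero hQ (le_of_lt hQ) n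
  have hne1 : (1:ℂ) - Q^(n+1) ≠ 0 := one_sub_pow_ne hQ n
  have hqs : qp Q Q (n+1) = qp Q Q n * (1 - Q^(n+1)) := by
    rw [qp_succ]
    congr 2
    rw [pow_succ]
    ring
  rw [ec, ec, hqs]
  simp only [Nat.add_sub_cancel, Nat.sub_self]
  rw [tri_succ, pow_add]
  field_simp
  ring

lemma summable_ec {Q : ℂ} (hQ : ‖Q‖ < 1) (t : ℂ) :
    Summable (fun n => ec Q n * t ^ n) := by
  set E : ℝ := (1 - ‖Q‖)⁻¹ with hE
  have hEnn : 0 ≤ E := by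
    rw [hE, inv_nonneg]
    linarith
  refine Summable.of_norm_bounded (g := fun n => (E * ‖t‖)^n * ‖Q‖^(n*(n-1)/2))
    (summable_aux (by positivity) (norm_nonneg Q) hQ) (fun n => ?_)
  have h1 : ‖ec Q n‖ ≤ ‖Q‖^(n*(n-1)/2) * E^n := by
    have := norm_div_qp_le hQ (le_of_lt hQ) n ((-1)^n * Q^(n*(n-1)/2))
    calc ‖ec Q n‖ = ‖((-1)^n * Q^(n*(n-1)/2)) / qp Q Q n‖ := rfl
      _ ≤ ‖(-1 : ℂ)^n * Q^(n*(n-1)/2)‖ * E^n := this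
      _ = ‖Q‖^(n*(n-1)/2) * E^n := by
          rw [norm_mul, norm_pow, norm_pow, norm_neg, norm_one, one_pow, one_mul]
  calc ‖ec Q n * t^n‖ = ‖ec Q n‖ * ‖t‖^n := by rw [norm_mul, norm_pow]
    _ ≤ (‖Q‖^(n*(n-1)/2) * E^n) * ‖t‖^n := by
        refine mul_le_mul_of_nonneg_right h1 (by positivity)
    _ = (E * ‖t‖)^n * ‖Q‖^(n*(n-1)/2) := by rw [mul_pow]; ring

lemma euler_tsum {Q : ℂ} (hQ : ‖Q‖ < 1) (t : ℂ) :
    ∑' n, ec Q n * t ^ n = qpInf t Q := by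
  set S : ℂ → ℂ := fun u => ∑' n, ec Q n * u ^ n with hS
  -- functional equation
  have step : ∀ u : ℂ, S u = (1 - u) * S (u * Q) := by
    intro u
    have hsu : Summable (fun n => ec Q n * u ^ n) := summable_ec hQ u
    have hsuq : Summable (fun n => ec Q n * (u * Q) ^ n) := summable_ec hQ (u * Q)
    have hdiff : S u - S (u * Q) = ∑' n, (ec Q n * u ^ n - ec Q n * (u * Q) ^ n) :=
      (Summable.tsum_sub hsu hsuq).symm
    have hsd : Summable (fun n => ec Q n * u ^ n - ec Q n * (u * Q) ^ n) := hsu.sub hsuq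
    have hzero : ec Q 0 * u ^ 0 - ec Q 0 * (u * Q) ^ 0 = 0 := by simp
    have hshift : ∀ n : ℕ, ec Q (n+1) * u ^ (n+1) - ec Q (n+1) * (u * Q) ^ (n+1)
        = -u * (ec Q n * (u * Q) ^ n) := by
      intro n
      have h1 : ec Q (n+1) * u^(n+1) - ec Q (n+1) * (u*Q)^(n+1)
          = (ec Q (n+1) * (1 - Q^(n+1))) * u^(n+1) := by
        rw [mul_pow]
        ring
      rw [h1, ec_succ hQ n, mul_pow]
      ring
    calc S u = S (u * Q) + (S u - S (u * Q)) := by ring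
      _ = S (u * Q) + ∑' n, (ec Q n * u ^ n - ec Q n * (u * Q) ^ n) := by rw [hdiff]
      _ = S (u * Q) + ∑' n, (ec Q (n+1) * u ^ (n+1) - ec Q (n+1) * (u * Q) ^ (n+1)) := by
          rw [Summable.tsum_eq_zero_add hsd, hzero, zero_add]
      _ = S (u * Q) + ∑' n, -u * (ec Q n * (u * Q) ^ n) := by
          congr 1
          exact tsum_congr hshift
      _ = S (u * Q) + -u * S (u * Q) := by rw [tsum_mul_left]
      _ = (1 - u) * S (u * Q) := by ring
  -- iterate
  have iterate : ∀ N : ℕ, S t = qp t Q N * S (t * Q ^ N) := by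
    intro N
    induction N with
    | zero => simp [qp_zero]
    | succ N ih =>
      rw [ih, step (t * Q ^ N), qp_succ]
      rw [show t * Q ^ N * Q = t * Q ^ (N+1) by rw [pow_succ]; ring]
      ring
  -- limits
  have h1 : Tendsto (fun N => qp t Q N) atTop (nhds (qpInf t Q)) := tendsto_qp t Q hQ
  -- norm bound for S u - 1
  set E : ℝ := (1 - ‖Q‖)⁻¹ with hE
  have hEnn : 0 ≤ E := by
    rw [hE, inv_nonneg]; linarith
  have hD : Summable (fun n => ‖ec Q (n+1)‖ * ‖t‖^n) := by
    refine Summable.of_norm_bounded (g := fun n => E * ((E * ‖t‖)^n * ‖Q‖^(n*(n-1)/2)))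
      ((summable_aux (by positivity) (norm_nonneg Q) hQ).mul_left E) (fun n => ?_)
    have h2 : ‖ec Q (n+1)‖ ≤ ‖Q‖^((n+1)*n/2) * E^(n+1) := by
      have := norm_div_qp_le hQ (le_of_lt hQ) (n+1) ((-1)^(n+1) * Q^((n+1)*n/2))
      calc ‖ec Q (n+1)‖ = ‖((-1)^(n+1) * Q^((n+1)*((n+1)-1)/2)) / qp Q Q (n+1)‖ := rfl
        _ = ‖((-1)^(n+1) * Q^((n+1)*n/2)) / qp Q Q (n+1)‖ := by norm_num
        _ ≤ ‖(-1 : ℂ)^(n+1) * Q^((n+1)*n/2)‖ * E^(n+1) := this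
        _ = ‖Q‖^((n+1)*n/2) * E^(n+1) := by
            rw [norm_mul, norm_pow, norm_pow, norm_neg, norm_one, one_pow, one_mul]
    have h3 : ‖Q‖^((n+1)*n/2) ≤ ‖Q‖^(n*(n-1)/2) :=
      pow_le_pow_of_le_one (norm_nonneg Q) (le_of_lt hQ) (by rw [tri_succ]; omega)
    have h4 : (0:ℝ) ≤ ‖t‖^n := by positivity
    rw [Real.norm_of_nonneg (by positivity)]
    calc ‖ec Q (n+1)‖ * ‖t‖^n ≤ (‖Q‖^((n+1)*n/2) * E^(n+1)) * ‖t‖^n := by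
          exact mul_le_mul_of_nonneg_right h2 h4
      _ ≤ (‖Q‖^(n*(n-1)/2) * E^(n+1)) * ‖t‖^n := by
          refine mul_le_mul_of_nonneg_right (mul_le_mul_of_nonneg_right h3 (by positivity)) h4
      _ = E * ((E * ‖t‖)^n * ‖Q‖^(n*(n-1)/2)) := by
          rw [mul_pow, pow_succ]
          ring
  set D : ℝ := ∑' n, ‖ec Q (n+1)‖ * ‖t‖^n with hDdef
  have claim : ∀ u : ℂ, ‖u‖ ≤ ‖t‖ → ‖S u - 1‖ ≤ ‖u‖ * D := by
    intro u hu
    have hsu : Summable (fun n => ec Q n * u ^ n) := summable_ec hQ u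
    have hsh : Summable (fun n => ec Q (n+1) * u ^ (n+1)) := (summable_nat_add_iff (f := fun n => ec Q n * u ^ n) 1).2 hsu
    have hSu : S u - 1 = ∑' n, ec Q (n+1) * u ^ (n+1) := by
      have := Summable.tsum_eq_zero_add hsu
      have h0 : ec Q 0 * u ^ 0 = 1 := by simp [ec_zero]
      rw [hS]
      simp only []
      rw [this, h0]
      ring
    have hnorms : Summable (fun n => ‖ec Q (n+1) * u ^ (n+1)‖) := by
      rw [summable_norm_iff]
      exact hsh
    rw [hSu]
    calc ‖∑' n, ec Q (n+1) * u ^ (n+1)‖ ≤ ∑' n, ‖ec Q (n+1) * u ^ (n+1)‖ :=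
          norm_tsum_le_tsum_norm hnorms
      _ ≤ ∑' n, ‖u‖ * (‖ec Q (n+1)‖ * ‖t‖^n) := by
          refine Summable.tsum_le_tsum (fun n => ?_) hnorms (hD.mul_left ‖u‖)
          rw [norm_mul, norm_pow, pow_succ]
          calc ‖ec Q (n+1)‖ * (‖u‖^n * ‖u‖)
              ≤ ‖ec Q (n+1)‖ * (‖t‖^n * ‖u‖) := by
                refine mul_le_mul_of_nonneg_left ?_ (norm_nonneg _)
                exact mul_le_mul_of_nonneg_right
                  (pow_le_pow_left₀ (norm_nonneg u) hu n) (norm_nonneg u)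
            _ = ‖u‖ * (‖ec Q (n+1)‖ * ‖t‖^n) := by ring
      _ = ‖u‖ * D := tsum_mul_left
  have h2 : Tendsto (fun N => S (t * Q ^ N)) atTop (nhds 1) := by
    rw [tendsto_iff_norm_sub_tendsto_zero]
    refine squeeze_zero (g := fun N => (‖t‖ * D) * ‖Q‖^N) (fun N => norm_nonneg _)
      (fun N => ?_) ?_
    · have hle : ‖t * Q ^ N‖ ≤ ‖t‖ := by
        rw [norm_mul, norm_pow]
        calc ‖t‖ * ‖Q‖^N ≤ ‖t‖ * 1 := by
              refine mul_le_mul_of_nonneg_left ?_ (norm_nonneg t)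
              exact pow_le_one₀ (norm_nonneg Q) (le_of_lt hQ)
          _ = ‖t‖ := mul_one _
      calc ‖S (t * Q ^ N) - 1‖ ≤ ‖t * Q ^ N‖ * D := claim (t * Q ^ N) hle
        _ = (‖t‖ * D) * ‖Q‖^N := by rw [norm_mul, norm_pow]; ring
    · simpa using
        (tendsto_pow_atTop_nhds_zero_of_lt_one (norm_nonneg Q) hQ).const_mul (‖t‖ * D)
  have h3 : Tendsto (fun N => qp t Q N * S (t * Q ^ N)) atTop (nhds (qpInf t Q * 1)) :=
    h1.mul h2
  have heq : (fun N => qp t Q N * S (t * Q ^ N)) = fun _ => S t :=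
    funext fun N => (iterate N).symm
  rw [heq] at h3
  have := tendsto_nhds_unique tendsto_const_nhds h3
  simpa using this
lemma qp_q_succ (q : ℂ) (m : ℕ) : qp q q (m+1) = qp q q m * (1 - q^(m+1)) := by
  rw [qp_succ, pow_succ']

lemma qpQ_succ (q : ℂ) (l : ℕ) :
    qp (q^2) (q^2) (l+1) = qp (q^2) (q^2) l * (1 - q^(2*l+2)) := by
  rw [qp_succ, ← pow_mul, ← pow_add, add_comm 2 (2*l)]

lemma one_sub_q_pow_ne {q : ℂ} (hq : ‖q‖ < 1) {m : ℕ} (hm : m ≠ 0) : (1:ℂ) - q^m ≠ 0 := by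
  obtain ⟨k, rfl⟩ := Nat.exists_eq_succ_of_ne_zero hm
  exact one_sub_pow_ne hq k

lemma finid (q : ℂ) (hq : ‖q‖ < 1) :
    ∀ n : ℕ, ∑ l ∈ Finset.range (n+1),
      (-1:ℂ)^l * q^(l*l) / (qp q q (n-l) * qp (q^2) (q^2) l) = 1 / qp (q^2) (q^2) n := by
  have hq2 : ‖q^2‖ < 1 := by
    rw [norm_pow]
    exact pow_lt_one₀ (norm_nonneg q) hq (by omega)
  have hQne : ∀ m, qp (q^2) (q^2) m ≠ 0 := qp_ne_zero hq2 (le_of_lt hq2)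
  have hqne : ∀ m, qp q q m ≠ 0 := qp_ne_zero hq (le_of_lt hq)
  intro n
  induction n with
  | zero => simp [qp_zero]
  | succ n ih =>
    have hZ : (1:ℂ) - q^(2*n+2) ≠ 0 := one_sub_q_pow_ne hq (by omega)
    -- the three split pieces
    set B : ℕ → ℂ := fun l =>
      ((-1:ℂ)^l * q^(l*l) * (1 - q^(n+1-l))) / (qp q q (n+1-l) * qp (q^2) (q^2) l) with hBdef
    set C1 : ℕ → ℂ := fun l =>
      ((-1:ℂ)^l * q^(l*l) * (q^(n+1-l) * (1 - q^(2*l)))) /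
        (qp q q (n+1-l) * qp (q^2) (q^2) l) with hC1def
    set C2 : ℕ → ℂ := fun l =>
      ((-1:ℂ)^l * q^(l*l) * (q^(n+1-l) * q^(2*l) * (1 - q^(n+1-l)))) /
        (qp q q (n+1-l) * qp (q^2) (q^2) l) with hC2def
    have key : (∑ l ∈ Finset.range (n+1+1),
        (-1:ℂ)^l * q^(l*l) / (qp q q (n+1-l) * qp (q^2) (q^2) l)) * (1 - q^(2*n+2))
        = 1 / qp (q^2) (q^2) n := by
      rw [Finset.sum_mul]
      have per : ∀ l ∈ Finset.range (n+1+1),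
          ((-1:ℂ)^l * q^(l*l) / (qp q q (n+1-l) * qp (q^2) (q^2) l)) * (1 - q^(2*n+2))
          = B l + C1 l + C2 l := by
        intro l hl
        have hln : l ≤ n + 1 := by simpa [Nat.lt_succ_iff] using hl
        have hpow : q^(n+1-l) * q^(2*l) * q^(n+1-l) = q^(2*n+2) := by
          rw [← pow_add, ← pow_add]
          congr 1
          omega
        simp only [hBdef, hC1def, hC2def]
        rw [div_mul_eq_mul_div, ← add_div, ← add_div]
        congr 1
        linear_combination ((-1:ℂ)^l * q^(l*l)) * hpow
      rw [Finset.sum_congr rfl per, Finset.sum_add_distrib, Finset.sum_add_distrib]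
      -- B part equals IH sum
      have hB : ∑ l ∈ Finset.range (n+1+1), B l = 1 / qp (q^2) (q^2) n := by
        rw [Finset.sum_range_succ]
        have hBtop : B (n+1) = 0 := by
          simp only [hBdef]
          simp [Nat.sub_self]
        rw [hBtop, add_zero, ← ih]
        refine Finset.sum_congr rfl (fun l hl => ?_)
        have hln : l ≤ n := by simpa [Nat.lt_succ_iff] using hl
        have h1 : n + 1 - l = (n - l) + 1 := by omega
        simp only [hBdef]
        rw [h1, qp_q_succ]
        have hw : (1:ℂ) - q^((n-l)+1) ≠ 0 := one_sub_pow_ne hq (n-l)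
        have d1 := hqne (n-l)
        have d2 := hQne l
        rw [div_eq_div_iff (by exact mul_ne_zero (mul_ne_zero d1 hw) d2)
          (mul_ne_zero d1 d2)]
        ring
      -- C parts cancel
      have hC : (∑ l ∈ Finset.range (n+1+1), C1 l) + ∑ l ∈ Finset.range (n+1+1), C2 l = 0 := by
        rw [Finset.sum_range_succ' C1 (n+1), Finset.sum_range_succ C2 (n+1)]
        have hC10 : C1 0 = 0 := by
          simp only [hC1def]
          simp
        have hC2top : C2 (n+1) = 0 := by
          simp only [hC2def]
          simp [Nat.sub_self]
        rw [hC10, hC2top, add_zero, add_zero, ← Finset.sum_add_distrib]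
        refine Finset.sum_eq_zero (fun l hl => ?_)
        have hln : l ≤ n := by simpa [Nat.lt_succ_iff] using hl
        have h1 : n + 1 - (l + 1) = n - l := by omega
        have h2 : n + 1 - l = (n - l) + 1 := by omega
        simp only [hC1def, hC2def]
        rw [h1, h2, qpQ_succ, qp_q_succ]
        have hw : (1:ℂ) - q^((n-l)+1) ≠ 0 := one_sub_pow_ne hq (n-l)
        have hv : (1:ℂ) - q^(2*l+2) ≠ 0 := one_sub_q_pow_ne hq (by omega)
        have d1 := hqne (n-l)
        have d2 := hQne l
        rw [div_add_div _ _ (mul_ne_zero d1 (mul_ne_zero d2 hv))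
          (mul_ne_zero (mul_ne_zero d1 hw) d2), div_eq_zero_iff]
        left
        ring
      rw [hB]
      -- goal : 1/qpQ n + ∑C1 + ∑C2 = 1/qpQ n
      rw [add_assoc, hC, add_zero]
    have final := eq_div_of_mul_eq hZ key
    rw [final, div_div, ← qpQ_succ]
lemma tri_split (a b : ℕ) : (a+b)*((a+b)-1) = a*(a-1) + b*(b-1) + 2*a*b := by
  cases a with
  | zero => simp
  | succ a =>
    cases b with
    | zero => simp
    | succ b =>
      simp only [Nat.succ_sub_one, show a+1+(b+1)-1 = a+b+1 by omega]
      ring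

lemma tri_add_le (a b : ℕ) : a*(a-1) + b*(b-1) ≤ (a+b)*((a+b)-1) := by
  rw [tri_split]; omega

lemma pow_two_tri {M : Type*} [Monoid M] (r : M) (n : ℕ) :
    (r^2)^(n*(n-1)/2) = r^(n*(n-1)) := by
  rw [← pow_mul]
  congr 1
  have h : Even (n*(n-1)) := by
    cases n with
    | zero => simp
    | succ n => simpa [mul_comm] using Nat.even_mul_succ_self n
  obtain ⟨c, hc⟩ := h
  omega

lemma norm_qp_le {a q : ℂ} (hq : ‖q‖ ≤ 1) (n : ℕ) : ‖qp a q n‖ ≤ (1 + ‖a‖)^n := by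
  rw [qp, norm_prod]
  calc ∏ i ∈ Finset.range n, ‖1 - a * q ^ i‖ ≤ ∏ _i ∈ Finset.range n, (1 + ‖a‖) := by
        refine Finset.prod_le_prod (fun i _ => norm_nonneg _) (fun i _ => ?_)
        calc ‖1 - a * q^i‖ ≤ ‖(1:ℂ)‖ + ‖a * q^i‖ := norm_sub_le _ _
          _ ≤ 1 + ‖a‖ := by
              rw [norm_one, norm_mul, norm_pow]
              have : ‖a‖ * ‖q‖^i ≤ ‖a‖ * 1 :=
                mul_le_mul_of_nonneg_left (pow_le_one₀ (norm_nonneg q) hq) (norm_nonneg a)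
              linarith
    _ = (1 + ‖a‖)^n := by rw [Finset.prod_const, Finset.card_range]

lemma neg_one_pow_sub {R : Type*} [Ring R] {n j : ℕ} (h : j ≤ n) :
    ((-1 : R))^(n-j) = (-1)^n * (-1)^j := by
  have h1 : ((-1:R))^(n-j) = (-1)^(n-j) * ((-1)^2)^j := by
    simp
  rw [h1, ← pow_mul, ← pow_add, show n - j + 2*j = n + j by omega, pow_add]

lemma qp_mul_qpInf (a Q : ℂ) (hQ : ‖Q‖ < 1) (k : ℕ) :
    qp a Q k * qpInf (a * Q^k) Q = qpInf a Q := by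
  have hcongr : (fun i : ℕ => 1 - (a * Q^k) * Q^i) = (fun i : ℕ => 1 - a * Q^(i+k)) := by
    funext i
    rw [pow_add]
    ring
  have hm : Multipliable (fun i : ℕ => 1 - a * Q^(i+k)) := by
    rw [← hcongr]
    exact multipliable_qpInf (a * Q^k) Q hQ
  have h2 : qpInf (a * Q^k) Q = ∏' i, (1 - a * Q^(i+k)) := by
    rw [qpInf, hcongr]
  rw [h2, qp]
  exact Multipliable.prod_mul_tprod_nat_mul' hm

lemma zpow_conv (q : ℂ) (j k l : ℕ) :
    q ^ (((j:ℤ)+(k:ℤ)+(l:ℤ)) * ((j:ℤ)+(k:ℤ)+(l:ℤ)-1) + (l:ℤ)^2 + 3*(k:ℤ))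
    = q ^ ((j+k+l)*((j+k+l)-1) + l*l + 3*k) := by
  have hcast : (((j:ℤ)+(k:ℤ)+(l:ℤ)) * ((j:ℤ)+(k:ℤ)+(l:ℤ)-1) + (l:ℤ)^2 + 3*(k:ℤ))
      = (((j+k+l)*((j+k+l)-1) + l*l + 3*k : ℕ) : ℤ) := by
    by_cases h : j + k + l = 0
    · have hj : j = 0 := by omega
      have hk : k = 0 := by omega
      have hl : l = 0 := by omega
      subst hj; subst hk; subst hl
      norm_num
    · push_cast [Nat.cast_sub (show 1 ≤ j+k+l by omega)]
      ring
  rw [hcast, zpow_natCast]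

def triSwap : (ℕ × ℕ × ℕ) ≃ (ℕ × ℕ × ℕ) where
  toFun p := (p.2.1, p.1, p.2.2)
  invFun p := (p.2.1, p.1, p.2.2)
  left_inv p := rfl
  right_inv p := rfl

@[simp] lemma triSwap_apply (p : ℕ × ℕ × ℕ) : triSwap p = (p.2.1, p.1, p.2.2) := rfl
theorem stmt15 (q x : ℂ) (hq : ‖q‖ < 1) :
    (∑' j : ℕ, ∑' k : ℕ, ∑' l : ℕ,
      qp x (q^2) k * x ^ (j + l) * (-1) ^ (j + k)
        * q ^ (((j:ℤ)+(k:ℤ)+(l:ℤ)) * ((j:ℤ)+(k:ℤ)+(l:ℤ)-1) + (l:ℤ)^2 + 3*(k:ℤ))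
        / (qp q q j * qp (q^2) (q^2) k * qp (q^2) (q^2) l))
    = qpInf (q^3) (q^2) * qpInf x (q^2) := by
  have hq2 : ‖q^2‖ < 1 := by
    rw [norm_pow]
    exact pow_lt_one₀ (norm_nonneg q) hq (by omega)
  set G : ℕ → ℕ → ℕ → ℂ := fun j k l =>
    qp x (q^2) k * x ^ (j + l) * (-1) ^ (j + k)
      * q ^ ((j+k+l)*((j+k+l)-1) + l*l + 3*k)
      / (qp q q j * qp (q^2) (q^2) k * qp (q^2) (q^2) l) with hGdef
  -- Step 0: convert zpow to pow
  have step0 : (∑' j : ℕ, ∑' k : ℕ, ∑' l : ℕ,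
      qp x (q^2) k * x ^ (j + l) * (-1) ^ (j + k)
        * q ^ (((j:ℤ)+(k:ℤ)+(l:ℤ)) * ((j:ℤ)+(k:ℤ)+(l:ℤ)-1) + (l:ℤ)^2 + 3*(k:ℤ))
        / (qp q q j * qp (q^2) (q^2) k * qp (q^2) (q^2) l))
      = ∑' j : ℕ, ∑' k : ℕ, ∑' l : ℕ, G j k l := by
    refine tsum_congr fun j => tsum_congr fun k => tsum_congr fun l => ?_
    rw [hGdef, zpow_conv]
  rw [step0]
  -- bounds
  have h1q : (0:ℝ) < 1 - ‖q‖ := by linarith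
  have h1q2 : (0:ℝ) < 1 - ‖q^2‖ := by linarith
  set u : ℕ → ℝ := fun j => (‖x‖ * (1-‖q‖)⁻¹)^j * ‖q‖^(j*(j-1)) with hudef
  set v : ℕ → ℝ := fun k => ((1+‖x‖) * (1-‖q^2‖)⁻¹)^k * ‖q‖^(k*(k-1)) with hvdef
  set w : ℕ → ℝ := fun l => (‖x‖ * (1-‖q^2‖)⁻¹)^l * ‖q‖^(l*(l-1)) with hwdef
  have hb : ∀ j k l : ℕ, ‖G j k l‖ ≤ u j * (v k * w l) := by
    intro j k l
    have hnormeq : ‖G j k l‖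
        = ‖qp x (q^2) k‖ * ‖x‖^(j+l) * ‖q‖^((j+k+l)*((j+k+l)-1) + l*l + 3*k)
          / (‖qp q q j‖ * ‖qp (q^2) (q^2) k‖ * ‖qp (q^2) (q^2) l‖) := by
      rw [hGdef]
      simp only [norm_div, norm_mul, norm_pow, norm_neg, norm_one, one_pow, mul_one]
    have hnum : ‖qp x (q^2) k‖ * ‖x‖^(j+l) * ‖q‖^((j+k+l)*((j+k+l)-1) + l*l + 3*k)
        ≤ (1+‖x‖)^k * (‖x‖^j * ‖x‖^l) * (‖q‖^(j*(j-1)) * ‖q‖^(k*(k-1)) * ‖q‖^(l*(l-1))) := by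
      have e1 : ‖qp x (q^2) k‖ ≤ (1+‖x‖)^k := norm_qp_le (le_of_lt hq2) k
      have e2 : ‖x‖^(j+l) = ‖x‖^j * ‖x‖^l := pow_add _ _ _
      have e3 : ‖q‖^((j+k+l)*((j+k+l)-1) + l*l + 3*k)
          ≤ ‖q‖^(j*(j-1)) * ‖q‖^(k*(k-1)) * ‖q‖^(l*(l-1)) := by
        rw [← pow_add, ← pow_add]
        refine pow_le_pow_of_le_one (norm_nonneg q) (le_of_lt hq) ?_
        have t1 : j*(j-1) + k*(k-1) ≤ (j+k)*((j+k)-1) := tri_add_le j k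
        have t2 : (j+k)*((j+k)-1) + l*(l-1) ≤ (j+k+l)*((j+k+l)-1) := tri_add_le (j+k) l
        omega
      rw [e2]
      refine mul_le_mul ?_ e3 (by positivity) (by positivity)
      exact mul_le_mul_of_nonneg_right e1 (by positivity)
    have hden : (1-‖q‖)^j * (1-‖q^2‖)^k * (1-‖q^2‖)^l
        ≤ ‖qp q q j‖ * ‖qp (q^2) (q^2) k‖ * ‖qp (q^2) (q^2) l‖ := by
      have g1 := norm_qp_ge hq (le_of_lt hq) j
      have g2 := norm_qp_ge hq2 (le_of_lt hq2) k
      have g3 := norm_qp_ge hq2 (le_of_lt hq2) l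
      have n1 : (0:ℝ) ≤ (1-‖q‖)^j := le_of_lt (pow_pos h1q j)
      have n2 : (0:ℝ) ≤ (1-‖q^2‖)^k := le_of_lt (pow_pos h1q2 k)
      have n3 : (0:ℝ) ≤ (1-‖q^2‖)^l := le_of_lt (pow_pos h1q2 l)
      refine mul_le_mul (mul_le_mul g1 g2 n2 (norm_nonneg _)) g3 n3 ?_
      exact mul_nonneg (norm_nonneg _) (norm_nonneg _)
    have hdenpos : (0:ℝ) < (1-‖q‖)^j * (1-‖q^2‖)^k * (1-‖q^2‖)^l :=
      mul_pos (mul_pos (pow_pos h1q j) (pow_pos h1q2 k)) (pow_pos h1q2 l)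
    rw [hnormeq]
    calc ‖qp x (q^2) k‖ * ‖x‖^(j+l) * ‖q‖^((j+k+l)*((j+k+l)-1) + l*l + 3*k)
          / (‖qp q q j‖ * ‖qp (q^2) (q^2) k‖ * ‖qp (q^2) (q^2) l‖)
        ≤ ((1+‖x‖)^k * (‖x‖^j * ‖x‖^l)
            * (‖q‖^(j*(j-1)) * ‖q‖^(k*(k-1)) * ‖q‖^(l*(l-1))))
          / ((1-‖q‖)^j * (1-‖q^2‖)^k * (1-‖q^2‖)^l) := by
          refine div_le_div₀ (by positivity) hnum hdenpos hden
      _ = u j * (v k * w l) := by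
          simp only [hudef, hvdef, hwdef]
          rw [div_eq_mul_inv, mul_inv, mul_inv, ← inv_pow, ← inv_pow, ← inv_pow,
            mul_pow ‖x‖ (1-‖q‖)⁻¹, mul_pow (1+‖x‖) (1-‖q^2‖)⁻¹, mul_pow ‖x‖ (1-‖q^2‖)⁻¹]
          ring
  -- summability
  have husum : Summable u := by
    have := summable_aux (A := ‖x‖ * (1-‖q‖)⁻¹) (r := ‖q‖^2)
      (by positivity) (by positivity) (by rw [← norm_pow]; exact hq2)
    simpa only [pow_two_tri] using this
  have hvsum : Summable v := by
    have := summable_aux (A := (1+‖x‖) * (1-‖q^2‖)⁻¹) (r := ‖q‖^2)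
      (by positivity) (by positivity) (by rw [← norm_pow]; exact hq2)
    simpa only [pow_two_tri] using this
  have hwsum : Summable w := by
    have := summable_aux (A := ‖x‖ * (1-‖q^2‖)⁻¹) (r := ‖q‖^2)
      (by positivity) (by positivity) (by rw [← norm_pow]; exact hq2)
    simpa only [pow_two_tri] using this
  have hunn : ∀ j, 0 ≤ u j := fun j => by rw [hudef]; positivity
  have hvnn : ∀ k, 0 ≤ v k := fun k => by rw [hvdef]; positivity
  have hwnn : ∀ l, 0 ≤ w l := fun l => by rw [hwdef]; positivity
  have hvw : Summable (fun p : ℕ × ℕ => v p.1 * w p.2) :=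
    hvsum.mul_of_nonneg hwsum hvnn hwnn
  have huvw : Summable (fun p : ℕ × (ℕ × ℕ) => u p.1 * (v p.2.1 * w p.2.2)) :=
    husum.mul_of_nonneg hvw hunn (fun p => mul_nonneg (hvnn p.1) (hwnn p.2))
  have hSum : Summable (fun p : ℕ × ℕ × ℕ => G p.1 p.2.1 p.2.2) :=
    Summable.of_norm_bounded huvw (fun p => hb p.1 p.2.1 p.2.2)
  -- reorder
  have hSum' : Summable (fun p : ℕ × ℕ × ℕ => G p.2.1 p.1 p.2.2) := by
    have h := hSum.comp_injective triSwap.injective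
    simpa [Function.comp_def] using h
  have swap_eq : (∑' p : ℕ × ℕ × ℕ, G p.2.1 p.1 p.2.2)
      = ∑' p : ℕ × ℕ × ℕ, G p.1 p.2.1 p.2.2 := by
    have h := triSwap.tsum_eq (fun p : ℕ × ℕ × ℕ => G p.1 p.2.1 p.2.2)
    simpa using h
  have iter_eq : (∑' j : ℕ, ∑' k : ℕ, ∑' l : ℕ, G j k l)
      = ∑' p : ℕ × ℕ × ℕ, G p.1 p.2.1 p.2.2 := by
    rw [Summable.tsum_prod hSum]
    exact tsum_congr fun j => (Summable.tsum_prod (hSum.prod_factor j)).symm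
  have iter_eq2 : (∑' p : ℕ × ℕ × ℕ, G p.2.1 p.1 p.2.2)
      = ∑' k : ℕ, ∑' c : ℕ × ℕ, G c.1 k c.2 := by
    rw [Summable.tsum_prod hSum']
  rw [iter_eq, ← swap_eq, iter_eq2]
  -- evaluate inner double sums
  set A : ℕ → ℂ := fun k =>
    qp x (q^2) k * (-1)^k * q^(k*(k-1)+3*k) / qp (q^2) (q^2) k with hAdef
  have inner_eval : ∀ k : ℕ, (∑' c : ℕ × ℕ, G c.1 k c.2)
      = A k * qpInf (x * q^(2*k)) (q^2) := by
    intro k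
    have hgk : Summable (fun c : ℕ × ℕ => G c.1 k c.2) := hSum'.prod_factor k
    have hsig : Summable (fun σ : Σ n : ℕ, Finset.HasAntidiagonal.antidiagonal n =>
        G (σ.2 : ℕ × ℕ).1 k (σ.2 : ℕ × ℕ).2) := by
      have h := hgk.comp_injective
        (Finset.HasAntidiagonal.sigmaAntidiagonalEquivProd (A := ℕ)).injective
      simpa [Function.comp_def, Finset.HasAntidiagonal.sigmaAntidiagonalEquivProd_apply] using h
    have toSigma : (∑' c : ℕ × ℕ, G c.1 k c.2)
        = ∑' σ : Σ n : ℕ, Finset.HasAntidiagonal.antidiagonal n, G (σ.2 : ℕ × ℕ).1 k (σ.2 : ℕ × ℕ).2 := by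
      have h := (Finset.HasAntidiagonal.sigmaAntidiagonalEquivProd (A := ℕ)).tsum_eq
        (fun c : ℕ × ℕ => G c.1 k c.2)
      simp only [Finset.HasAntidiagonal.sigmaAntidiagonalEquivProd_apply] at h
      exact h.symm
    rw [toSigma, Summable.tsum_sigma hsig]
    -- now ∑' n, ∑' (c : antidiagonal n), ...
    have fin_eval : ∀ n : ℕ,
        (∑' c : (Finset.HasAntidiagonal.antidiagonal n : Finset (ℕ × ℕ)), G (c : ℕ × ℕ).1 k (c : ℕ × ℕ).2)
        = A k * (ec (q^2) n * (x * q^(2*k))^n) := by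
      intro n
      rw [Finset.tsum_subtype (Finset.HasAntidiagonal.antidiagonal n) (fun c => G c.1 k c.2)]
      rw [Finset.Nat.sum_antidiagonal_eq_sum_range_succ_mk (fun c => G c.1 k c.2) n]
      -- per-i rewrite
      have step1 : ∀ i ∈ Finset.range (n+1), G i k (n-i)
          = (A k * (x^n * q^(n*(n-1) + 2*k*n)))
            * ((-1:ℂ)^i * q^((n-i)*(n-i)) / (qp q q i * qp (q^2) (q^2) (n-i))) := by
        intro i hi
        have hin : i ≤ n := by simpa [Nat.lt_succ_iff] using hi
        have hx : i + (n - i) = n := by omega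
        have hE : (i+k+(n-i))*((i+k+(n-i))-1) + (n-i)*(n-i) + 3*k
            = (k*(k-1) + 3*k) + ((n*(n-1) + 2*k*n) + (n-i)*(n-i)) := by
          have h1 : i+k+(n-i) = n+k := by omega
          rw [h1, tri_split]
          ring
        rw [hGdef, hAdef]
        simp only []
        rw [hx, hE, pow_add q (k*(k-1) + 3*k) ((n*(n-1) + 2*k*n) + (n-i)*(n-i)),
          pow_add q (n*(n-1) + 2*k*n) ((n-i)*(n-i)), pow_add (-1:ℂ) i k]
        ring
      rw [Finset.sum_congr rfl step1, ← Finset.mul_sum]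
      -- reflect and apply finid
      have hrefl := Finset.sum_range_reflect
        (fun i => (-1:ℂ)^i * q^((n-i)*(n-i)) / (qp q q i * qp (q^2) (q^2) (n-i))) (n+1)
      have hrefl2 : ∑ i ∈ Finset.range (n+1),
          (-1:ℂ)^i * q^((n-i)*(n-i)) / (qp q q i * qp (q^2) (q^2) (n-i))
          = (-1:ℂ)^n / qp (q^2) (q^2) n := by
        rw [← hrefl]
        have congr1 : ∀ j ∈ Finset.range (n+1),
            (-1:ℂ)^(n+1-1-j) * q^((n-(n+1-1-j))*(n-(n+1-1-j)))
              / (qp q q (n+1-1-j) * qp (q^2) (q^2) (n-(n+1-1-j)))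
            = (-1:ℂ)^n * ((-1:ℂ)^j * q^(j*j) / (qp q q (n-j) * qp (q^2) (q^2) j)) := by
          intro j hj
          have hjn : j ≤ n := by simpa [Nat.lt_succ_iff] using hj
          have h1 : n + 1 - 1 - j = n - j := by omega
          have h2 : n - (n - j) = j := by omega
          rw [h1, h2, neg_one_pow_sub hjn]
          ring
        rw [Finset.sum_congr rfl congr1, ← Finset.mul_sum, finid q hq n]
        rw [mul_one_div]
      rw [hrefl2]
      -- final algebra
      rw [ec, pow_two_tri, mul_pow x, ← pow_mul q (2*k) n, pow_add q (n*(n-1)) (2*k*n)]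
      ring
    rw [tsum_congr fin_eval, tsum_mul_left, euler_tsum hq2]
  rw [tsum_congr inner_eval]
  -- outer sum
  have outer : ∀ k : ℕ, A k * qpInf (x * q^(2*k)) (q^2)
      = qpInf x (q^2) * (ec (q^2) k * ((q:ℂ)^3)^k) := by
    intro k
    have hsplit : qp x (q^2) k * qpInf (x * q^(2*k)) (q^2) = qpInf x (q^2) := by
      have := qp_mul_qpInf x (q^2) hq2 k
      rwa [← pow_mul] at this
    calc A k * qpInf (x * q^(2*k)) (q^2)
        = (qp x (q^2) k * qpInf (x * q^(2*k)) (q^2))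
            * ((-1:ℂ)^k * q^(k*(k-1)+3*k) / qp (q^2) (q^2) k) := by
          rw [hAdef]
          ring
      _ = qpInf x (q^2) * ((-1:ℂ)^k * q^(k*(k-1)+3*k) / qp (q^2) (q^2) k) := by
          rw [hsplit]
      _ = qpInf x (q^2) * (ec (q^2) k * ((q:ℂ)^3)^k) := by
          rw [ec, pow_two_tri, ← pow_mul q 3 k, pow_add]
          ring
  rw [tsum_congr outer, tsum_mul_left, euler_tsum hq2, mul_comm]
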